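/- Let (A,B) be a suitable pair of k-tuples with compound sequence (g_0,...,g_k). The Frobenius number of the numerical semigroup generated by {g_0,...,g_k} is F = −Σ_{i=0}^k g_i + Σ_{i=1}^k b_1···b_i·a_i···a_k; equivalently, F = a_k·b_1·σ(π_k(A),π_1(B)) − σ(A,B), where σ denotes the sum of the elements of the corresponding compound sequence and π_i deletes the i-th component. -/

import Mathlib

open Finset

/-- The compound sequence: `g k A B i = b₁⋯bᵢ · aᵢ₊₁⋯a_k` (0-indexed: `A j = a_{j+1}`,
`B j = b_{j+1}`). -/
def compoundSeq (k : ℕ) (A B : ℕ → ℕ) (i : ℕ) : ℕ :=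
  (∏ j ∈ Finset.range i, B j) * (∏ j ∈ Finset.Ico i k, A j)

/-- `n : ℤ` is representable as a nonnegative integer combination of `g₀,…,g_k`. -/
def RepZ (k : ℕ) (A B : ℕ → ℕ) (n : ℤ) : Prop :=
  ∃ c : Fin (k + 1) → ℕ, n = ∑ i : Fin (k + 1), (c i : ℤ) * (compoundSeq k A B (i : ℕ) : ℤ)

lemma compound_step (k : ℕ) (A B : ℕ → ℕ) (i : ℕ) (hi : i ≤ k) :
    compoundSeq (k+1) A B i = A k * compoundSeq k A B i := by
  unfold compoundSeq
  rw [Finset.prod_Ico_succ_top hi]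
  ring

lemma compound_stepZ (k : ℕ) (A B : ℕ → ℕ) (i : ℕ) (hi : i ≤ k) :
    (compoundSeq (k+1) A B i : ℤ) = (A k : ℤ) * (compoundSeq k A B i : ℤ) := by
  exact_mod_cast congrArg (Nat.cast : ℕ → ℤ) (compound_step k A B i hi)

lemma compound_key (k : ℕ) (A B : ℕ → ℕ) (i : ℕ) (hi : i < k) :
    A i * compoundSeq k A B (i+1) = B i * compoundSeq k A B i := by
  unfold compoundSeq
  rw [Finset.prod_eq_prod_Ico_succ_bot hi, Finset.prod_range_succ]
  ring

lemma compound_keyZ (k : ℕ) (A B : ℕ → ℕ) (i : ℕ) (hi : i < k) :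
    (A i : ℤ) * (compoundSeq k A B (i+1) : ℤ) = (B i : ℤ) * (compoundSeq k A B i : ℤ) := by
  exact_mod_cast congrArg (Nat.cast : ℕ → ℤ) (compound_key k A B i hi)

lemma compound_pos (k : ℕ) (A B : ℕ → ℕ) (hA : ∀ i < k, 0 < A i) (hB : ∀ i < k, 0 < B i)
    (i : ℕ) (hi : i ≤ k) : 0 < compoundSeq k A B i := by
  refine Nat.mul_pos (Finset.prod_pos ?_) (Finset.prod_pos ?_)
  · intro j hj; simp only [Finset.mem_range] at hj; exact hB j (by omega)
  · intro j hj; simp only [Finset.mem_Ico] at hj; exact hA j hj.2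

lemma exists_inv_mod (a b : ℕ) (ha : 0 < a) (hco : Nat.Coprime a b) (r : ℤ) :
    ∃ x : ℕ, x < a ∧ (a : ℤ) ∣ r - (x : ℤ) * b := by
  haveI : NeZero a := ⟨ha.ne'⟩
  set u := ZMod.unitOfCoprime b hco.symm with hu
  refine ⟨((r : ZMod a) * ((u⁻¹ : (ZMod a)ˣ) : ZMod a)).val, ZMod.val_lt _, ?_⟩
  rw [← ZMod.intCast_zmod_eq_zero_iff_dvd]
  push_cast
  rw [ZMod.natCast_val, ZMod.cast_id]
  have hb : ((b : ZMod a)) = (u : ZMod a) := (ZMod.coe_unitOfCoprime b hco.symm).symm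
  rw [hb, mul_assoc, Units.inv_mul, mul_one, sub_self]

/-- Normal form: any ℕ-combination of the gᵢ equals one with canonical coefficients. -/
lemma nf (A B : ℕ → ℕ) : ∀ k : ℕ, (∀ i < k, 0 < A i) → ∀ e : ℕ → ℕ,
    ∃ c : ℕ → ℕ, (∀ t < k, c (t+1) < A t) ∧
      ∑ i ∈ Finset.range (k+1), (c i : ℤ) * (compoundSeq k A B i : ℤ)
        = ∑ i ∈ Finset.range (k+1), (e i : ℤ) * (compoundSeq k A B i : ℤ) := by
  intro k
  induction k with
  | zero => exact fun _ e => ⟨e, by omega, rfl⟩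
  | succ k IH =>
    intro hA e
    obtain ⟨q, r, hr, hqr⟩ : ∃ q r, r < A k ∧ e (k+1) = A k * q + r :=
      ⟨e (k+1) / A k, e (k+1) % A k, Nat.mod_lt _ (hA k (by omega)),
        (Nat.div_add_mod (e (k+1)) (A k)).symm⟩
    set e' := Function.update e k (e k + q * B k) with he'
    obtain ⟨c', hc', hsum'⟩ := IH (fun i hi => hA i (by omega)) e'
    refine ⟨Function.update c' (k+1) r, ?_, ?_⟩
    · intro t ht
      rcases Nat.lt_or_ge t k with h | h
      · rw [Function.update_of_ne (by omega)]
        exact hc' t h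
      · have htk : t = k := by omega
        subst htk
        rw [Function.update_self]
        exact hr
    · rw [Finset.sum_range_succ, Finset.sum_range_succ
        (f := fun i => (e i : ℤ) * (compoundSeq (k+1) A B i : ℤ))]
      rw [Function.update_self]
      have h1 : ∑ i ∈ Finset.range (k+1),
            ((Function.update c' (k+1) r) i : ℤ) * (compoundSeq (k+1) A B i : ℤ)
          = (A k : ℤ) * ∑ i ∈ Finset.range (k+1), (c' i : ℤ) * (compoundSeq k A B i : ℤ) := by
        rw [Finset.mul_sum]
        refine Finset.sum_congr rfl ?_
        intro i hi
        simp only [Finset.mem_range] at hi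
        rw [Function.update_of_ne (by omega), compound_stepZ k A B i (by omega)]
        ring
      have h2 : ∑ i ∈ Finset.range (k+1), (e' i : ℤ) * (compoundSeq k A B i : ℤ)
          = (∑ i ∈ Finset.range (k+1),
              ((e i : ℤ) * (compoundSeq k A B i : ℤ)
                + if i = k then (q : ℤ) * (B k : ℤ) * (compoundSeq k A B k : ℤ) else 0)) := by
        refine Finset.sum_congr rfl ?_
        intro i hi
        rcases eq_or_ne i k with h | h
        · subst h
          rw [he', Function.update_self]
          simp only [if_true]
          push_cast
          ring
        · rw [he', Function.update_of_ne h]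
          simp [h]
      rw [h1, hsum', h2, Finset.mul_sum]
      have h3 : ∀ i ∈ Finset.range (k+1),
          (A k : ℤ) * ((e i : ℤ) * (compoundSeq k A B i : ℤ)
              + if i = k then (q : ℤ) * (B k : ℤ) * (compoundSeq k A B k : ℤ) else 0)
          = (e i : ℤ) * (compoundSeq (k+1) A B i : ℤ)
              + if i = k then (A k : ℤ) * ((q : ℤ) * (B k : ℤ) * (compoundSeq k A B k : ℤ)) else 0 := by
        intro i hi
        simp only [Finset.mem_range] at hi
        rw [compound_stepZ k A B i (by omega)]
        rcases eq_or_ne i k with h | h <;> simp [h] <;> ring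
      rw [Finset.sum_congr rfl h3, Finset.sum_add_distrib,
        Finset.sum_ite_eq' (Finset.range (k+1)) k]
      simp only [Finset.mem_range, Nat.lt_succ_self, if_true]
      have hkey : (A k : ℤ) * (compoundSeq (k+1) A B (k+1) : ℤ)
          = (B k : ℤ) * (compoundSeq (k+1) A B k : ℤ) := compound_keyZ (k+1) A B k (by omega)
      have hBk : (compoundSeq (k+1) A B k : ℤ) = (A k : ℤ) * (compoundSeq k A B k : ℤ) :=
        compound_stepZ k A B k le_rfl
      have heqr : ((e (k+1) : ℤ)) = (A k : ℤ) * q + r := by exact_mod_cast hqr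
      rw [heqr]
      have h4 : (A k : ℤ) * ((q : ℤ) * (B k : ℤ) * (compoundSeq k A B k : ℤ))
          = ((A k : ℤ) * q) * (compoundSeq (k+1) A B (k+1) : ℤ) := by
        calc (A k : ℤ) * ((q : ℤ) * (B k : ℤ) * (compoundSeq k A B k : ℤ))
            = (q : ℤ) * ((B k : ℤ) * (compoundSeq (k+1) A B k : ℤ)) := by rw [hBk]; ring
          _ = (q : ℤ) * ((A k : ℤ) * (compoundSeq (k+1) A B (k+1) : ℤ)) := by rw [hkey]
          _ = _ := by ring
      linarith [h4]

lemma compound_top (k : ℕ) (A B : ℕ → ℕ) :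
    compoundSeq k A B k = ∏ j ∈ Finset.range k, B j := by
  simp [compoundSeq]

/-- Uniqueness of canonical coefficients modulo g₀. -/
lemma uniq (A B : ℕ → ℕ) : ∀ k : ℕ, (∀ i < k, 0 < A i) →
    (∀ i j, j ≤ i → i < k → Nat.Coprime (A i) (B j)) →
    ∀ c d : ℕ → ℕ, (∀ t < k, c (t+1) < A t) → (∀ t < k, d (t+1) < A t) →
    (compoundSeq k A B 0 : ℤ) ∣
      (∑ t ∈ Finset.range k, (c (t+1) : ℤ) * (compoundSeq k A B (t+1) : ℤ)
       - ∑ t ∈ Finset.range k, (d (t+1) : ℤ) * (compoundSeq k A B (t+1) : ℤ)) →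
    ∀ t, t < k → c (t+1) = d (t+1) := by
  intro k
  induction k with
  | zero => intro _ _ _ _ _ _ _ t ht; omega
  | succ k IH =>
    intro hA hco c d hc hd hdvd
    have hAk : 0 < A k := hA k (by omega)
    have hG0 : (compoundSeq (k+1) A B 0 : ℤ) = (A k : ℤ) * (compoundSeq k A B 0 : ℤ) :=
      compound_stepZ k A B 0 (by omega)
    have hsplit : ∀ e : ℕ → ℕ,
        ∑ t ∈ Finset.range (k+1), (e (t+1) : ℤ) * (compoundSeq (k+1) A B (t+1) : ℤ)
        = (A k : ℤ) * (∑ t ∈ Finset.range k, (e (t+1) : ℤ) * (compoundSeq k A B (t+1) : ℤ))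
          + (e (k+1) : ℤ) * (compoundSeq (k+1) A B (k+1) : ℤ) := by
      intro e
      rw [Finset.sum_range_succ, Finset.mul_sum]
      congr 1
      refine Finset.sum_congr rfl ?_
      intro t ht
      simp only [Finset.mem_range] at ht
      rw [compound_stepZ k A B (t+1) (by omega)]
      ring
    set X := (∑ t ∈ Finset.range k, (c (t+1) : ℤ) * (compoundSeq k A B (t+1) : ℤ))
       - ∑ t ∈ Finset.range k, (d (t+1) : ℤ) * (compoundSeq k A B (t+1) : ℤ) with hX
    set y := (c (k+1) : ℤ) - (d (k+1) : ℤ) with hy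
    have hD : (∑ t ∈ Finset.range (k+1), (c (t+1) : ℤ) * (compoundSeq (k+1) A B (t+1) : ℤ)
       - ∑ t ∈ Finset.range (k+1), (d (t+1) : ℤ) * (compoundSeq (k+1) A B (t+1) : ℤ))
        = (A k : ℤ) * X + y * (compoundSeq (k+1) A B (k+1) : ℤ) := by
      rw [hsplit c, hsplit d, hX, hy]; ring
    rw [hD, hG0] at hdvd
    have hcop : Nat.Coprime (A k) (∏ j ∈ Finset.range (k+1), B j) := by
      refine Nat.Coprime.prod_right ?_
      intro j hj
      simp only [Finset.mem_range] at hj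
      exact hco k j (by omega) (by omega)
    have hcopZ : IsCoprime ((A k : ℤ)) ((compoundSeq (k+1) A B (k+1) : ℤ)) := by
      rw [compound_top (k+1) A B]
      exact_mod_cast Nat.isCoprime_iff_coprime.mpr hcop
    have hAdvd : (A k : ℤ) ∣ y * (compoundSeq (k+1) A B (k+1) : ℤ) := by
      have h1 : (A k : ℤ) ∣ (A k : ℤ) * X + y * (compoundSeq (k+1) A B (k+1) : ℤ) :=
        dvd_trans (Dvd.intro _ rfl) hdvd
      exact (dvd_add_right (Dvd.intro _ rfl)).mp h1
    have hAy : (A k : ℤ) ∣ y := hcopZ.dvd_of_dvd_mul_right hAdvd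
    have hy0 : y = 0 := by
      obtain ⟨z, hz⟩ := hAy
      have hcb : (c (k+1) : ℤ) < A k := by exact_mod_cast hc k (by omega)
      have hdb : (d (k+1) : ℤ) < A k := by exact_mod_cast hd k (by omega)
      have hc0 : (0 : ℤ) ≤ c (k+1) := Int.natCast_nonneg _
      have hd0 : (0 : ℤ) ≤ d (k+1) := Int.natCast_nonneg _
      have hApos : (0 : ℤ) < A k := by exact_mod_cast hAk
      have hylt : y < (A k : ℤ) := by rw [hy]; linarith
      have hygt : -(A k : ℤ) < y := by rw [hy]; linarith
      have h1 : z < 1 := by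
        have h : (A k : ℤ) * z < (A k : ℤ) * 1 := by rw [← hz, mul_one]; linarith
        exact lt_of_mul_lt_mul_left h (le_of_lt hApos)
      have h2 : -1 < z := by
        have h : (A k : ℤ) * (-1) < (A k : ℤ) * z := by rw [← hz]; linarith
        exact lt_of_mul_lt_mul_left h (le_of_lt hApos)
      have hz0 : z = 0 := by omega
      rw [hz0, mul_zero] at hz
      exact hz
    have htop : c (k+1) = d (k+1) := by
      have : (c (k+1) : ℤ) = (d (k+1) : ℤ) := by omega
      exact_mod_cast this
    have hXdvd : (compoundSeq k A B 0 : ℤ) ∣ X := by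
      rw [hy0, zero_mul, add_zero] at hdvd
      have hAne : (A k : ℤ) ≠ 0 := by positivity
      exact (mul_dvd_mul_iff_left hAne).mp hdvd
    have hrest := IH (fun i hi => hA i (by omega)) (fun i j hj hik => hco i j hj (by omega))
      c d (fun t ht => hc t (by omega)) (fun t ht => hd t (by omega)) hXdvd
    intro t ht
    rcases Nat.lt_or_ge t k with h | h
    · exact hrest t h
    · have : t = k := by omega
      subst this
      exact htop

/-- Surjectivity: every residue mod g₀ is hit by a canonical combination. -/
lemma surj (A B : ℕ → ℕ) : ∀ k : ℕ, (∀ i < k, 0 < A i) →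
    (∀ i j, j ≤ i → i < k → Nat.Coprime (A i) (B j)) →
    ∀ r : ℤ, ∃ c : ℕ → ℕ, (∀ t < k, c (t+1) < A t) ∧
      (compoundSeq k A B 0 : ℤ) ∣
        (r - ∑ t ∈ Finset.range k, (c (t+1) : ℤ) * (compoundSeq k A B (t+1) : ℤ)) := by
  intro k
  induction k with
  | zero =>
    intro _ _ r
    refine ⟨fun _ => 0, by omega, ?_⟩
    simp [compoundSeq]
  | succ k IH =>
    intro hA hco r
    have hAk : 0 < A k := hA k (by omega)
    have hcop : Nat.Coprime (A k) (∏ j ∈ Finset.range (k+1), B j) := by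
      refine Nat.Coprime.prod_right ?_
      intro j hj
      simp only [Finset.mem_range] at hj
      exact hco k j (by omega) (by omega)
    obtain ⟨x, hx, hxdvd⟩ := exists_inv_mod (A k) (∏ j ∈ Finset.range (k+1), B j) hAk hcop r
    have hPk : (compoundSeq (k+1) A B (k+1) : ℤ) = ((∏ j ∈ Finset.range (k+1), B j : ℕ) : ℤ) := by
      exact_mod_cast congrArg (Nat.cast : ℕ → ℤ) (compound_top (k+1) A B)
    obtain ⟨r', hr'⟩ := hxdvd
    obtain ⟨c', hc', hdvd'⟩ := IH (fun i hi => hA i (by omega))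
      (fun i j hj hik => hco i j hj (by omega)) r'
    refine ⟨Function.update c' (k+1) x, ?_, ?_⟩
    · intro t ht
      rcases Nat.lt_or_ge t k with h | h
      · rw [Function.update_of_ne (by omega)]
        exact hc' t h
      · have : t = k := by omega
        subst this
        rw [Function.update_self]
        exact hx
    · have hsplit :
          ∑ t ∈ Finset.range (k+1),
            ((Function.update c' (k+1) x) (t+1) : ℤ) * (compoundSeq (k+1) A B (t+1) : ℤ)
          = (A k : ℤ) * (∑ t ∈ Finset.range k, (c' (t+1) : ℤ) * (compoundSeq k A B (t+1) : ℤ))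
            + (x : ℤ) * (compoundSeq (k+1) A B (k+1) : ℤ) := by
        rw [Finset.sum_range_succ, Finset.mul_sum, Function.update_self]
        congr 1
        refine Finset.sum_congr rfl ?_
        intro t ht
        simp only [Finset.mem_range] at ht
        rw [Function.update_of_ne (by omega), compound_stepZ k A B (t+1) (by omega)]
        ring
      rw [hsplit, compound_stepZ k A B 0 (by omega), hPk]
      obtain ⟨s, hs⟩ := hdvd'
      refine ⟨s, ?_⟩
      have : r - (x : ℤ) * ((∏ j ∈ Finset.range (k+1), B j : ℕ) : ℤ) = (A k : ℤ) * r' := hr'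
      nlinarith [hs, this]

lemma term_eq (k : ℕ) (A B : ℕ → ℕ) (t : ℕ) (ht : t < k) :
    (∏ l ∈ Finset.range (t+1), B l) * (∏ l ∈ Finset.Ico t k, A l)
      = A t * compoundSeq k A B (t+1) := by
  unfold compoundSeq
  rw [Finset.prod_eq_prod_Ico_succ_bot ht]
  ring

lemma part1_term (m : ℕ) (A B : ℕ → ℕ) (i : ℕ) (hi : i ≤ m) :
    (∏ l ∈ Finset.range (i+1), B l) * (∏ l ∈ Finset.Ico i (m+1), A l)
      = A m * B 0 * compoundSeq m A (fun l => B (l+1)) i := by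
  unfold compoundSeq
  rw [Finset.prod_range_succ', Finset.prod_Ico_succ_top hi]
  ring


/-- The Frobenius number of the numerical semigroup generated by a compound sequence is
`F = −Σ gᵢ + Σ_{i=1}^k b₁⋯bᵢ·aᵢ⋯a_k = a_k·b₁·σ(π_k(A),π_1(B)) − σ(A,B)`. -/
theorem frobenius_compound (k : ℕ) (hk : 1 ≤ k) (A B : ℕ → ℕ)
    (hA : ∀ i, i < k → 0 < A i) (hB : ∀ i, i < k → 0 < B i)
    (hsuit : ∀ i j, j ≤ i → i < k → Nat.Coprime (A i) (B j))
    (F : ℤ)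
    (hF : F = -(∑ i ∈ Finset.range (k + 1), (compoundSeq k A B i : ℤ)) +
        ∑ t ∈ Finset.range k,
          ((∏ l ∈ Finset.range (t + 1), B l : ℕ) : ℤ) * ((∏ l ∈ Finset.Ico t k, A l : ℕ) : ℤ)) :
    -- the alternative form F = a_k·b₁·σ(π_k(A),π_1(B)) − σ(A,B)
    (F = (A (k - 1) : ℤ) * (B 0 : ℤ) *
          (∑ i ∈ Finset.range k, (compoundSeq (k - 1) A (fun l => B (l + 1)) i : ℤ)) -
        ∑ i ∈ Finset.range (k + 1), (compoundSeq k A B i : ℤ)) ∧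
    -- F is the Frobenius number: not representable, and every larger integer is
    ¬ RepZ k A B F ∧ (∀ m : ℤ, F < m → RepZ k A B m) := by

  obtain ⟨m, rfl⟩ : ∃ m, k = m + 1 := ⟨k - 1, by omega⟩
  have hG0pos : (0 : ℤ) < (compoundSeq (m+1) A B 0 : ℤ) := by
    exact_mod_cast compound_pos (m+1) A B hA hB 0 (by omega)
  have hGpos : ∀ t, t < m + 1 → (0:ℤ) < (compoundSeq (m+1) A B (t+1) : ℤ) := by
    intro t ht
    exact_mod_cast compound_pos (m+1) A B hA hB (t+1) (by omega)
  have hterm : ∀ t ∈ Finset.range (m+1),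
      ((∏ l ∈ Finset.range (t+1), B l : ℕ) : ℤ) * ((∏ l ∈ Finset.Ico t (m+1), A l : ℕ) : ℤ)
        = (A t : ℤ) * (compoundSeq (m+1) A B (t+1) : ℤ) := by
    intro t ht
    simp only [Finset.mem_range] at ht
    exact_mod_cast congrArg (Nat.cast : ℕ → ℤ) (term_eq (m+1) A B t ht)
  have hsum_split : ∑ i ∈ Finset.range (m+1+1), (compoundSeq (m+1) A B i : ℤ)
      = (∑ t ∈ Finset.range (m+1), (compoundSeq (m+1) A B (t+1) : ℤ))
        + (compoundSeq (m+1) A B 0 : ℤ) :=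
    Finset.sum_range_succ' _ (m+1)
  have hF' : F = ∑ t ∈ Finset.range (m+1),
      ((A t : ℤ) - 1) * (compoundSeq (m+1) A B (t+1) : ℤ) - (compoundSeq (m+1) A B 0 : ℤ) := by
    rw [hF, Finset.sum_congr rfl hterm, hsum_split]
    have h : ∑ t ∈ Finset.range (m+1), ((A t:ℤ)-1) * (compoundSeq (m+1) A B (t+1):ℤ)
        = ∑ t ∈ Finset.range (m+1),
            ((A t:ℤ) * (compoundSeq (m+1) A B (t+1):ℤ) - (compoundSeq (m+1) A B (t+1):ℤ)) :=
      Finset.sum_congr rfl (fun t _ => by ring)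
    rw [h, Finset.sum_sub_distrib]
    ring
  refine ⟨?_, ?_, ?_⟩
  · -- Part 1
    simp only [Nat.add_sub_cancel]
    rw [hF, Finset.mul_sum]
    have h : ∀ i ∈ Finset.range (m+1),
        ((∏ l ∈ Finset.range (i+1), B l : ℕ) : ℤ) * ((∏ l ∈ Finset.Ico i (m+1), A l : ℕ) : ℤ)
          = (A m : ℤ) * (B 0 : ℤ) * (compoundSeq m A (fun l => B (l+1)) i : ℤ) := by
      intro i hi
      simp only [Finset.mem_range] at hi
      exact_mod_cast congrArg (Nat.cast : ℕ → ℤ) (part1_term m A B i (by omega))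
    rw [Finset.sum_congr rfl h]
    ring
  · -- Part 2: F is not representable
    rintro ⟨e, hrep⟩
    set E : ℕ → ℕ := fun i => if h : i < m + 1 + 1 then e ⟨i, h⟩ else 0 with hE
    have hconv : ∑ i : Fin (m+1+1), (e i : ℤ) * (compoundSeq (m+1) A B (i:ℕ) : ℤ)
        = ∑ i ∈ Finset.range (m+1+1), (E i : ℤ) * (compoundSeq (m+1) A B i : ℤ) := by
      rw [← Fin.sum_univ_eq_sum_range (fun i => (E i : ℤ) * (compoundSeq (m+1) A B i : ℤ)) (m+1+1)]
      refine Finset.sum_congr rfl ?_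
      intro i _
      simp [hE, i.isLt]
      exact fun h => absurd i.isLt (by omega)
    obtain ⟨c, hcbd, hceq⟩ := nf A B (m+1) hA E
    have hcF : ∑ i ∈ Finset.range (m+1+1), (c i : ℤ) * (compoundSeq (m+1) A B i : ℤ) = F := by
      rw [hceq, ← hconv, ← hrep]
    rw [Finset.sum_range_succ'
      (fun i => (c i : ℤ) * (compoundSeq (m+1) A B i : ℤ)) (m+1)] at hcF
    set cmax : ℕ → ℕ := fun i => A (i-1) - 1 with hcmax
    have hcmaxbd : ∀ t, t < m+1 → cmax (t+1) < A t := by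
      intro t ht
      simp only [hcmax, Nat.add_sub_cancel]
      have := hA t ht
      omega
    have hcmaxcast : ∀ t ∈ Finset.range (m+1),
        (cmax (t+1) : ℤ) * (compoundSeq (m+1) A B (t+1) : ℤ)
          = ((A t : ℤ) - 1) * (compoundSeq (m+1) A B (t+1) : ℤ) := by
      intro t ht
      simp only [Finset.mem_range] at ht
      have h1 : (cmax (t+1) : ℤ) = (A t : ℤ) - 1 := by
        simp only [hcmax, Nat.add_sub_cancel]
        have := hA t ht
        push_cast [Nat.cast_sub this]
        ring
      rw [h1]
    have hdvd : (compoundSeq (m+1) A B 0 : ℤ) ∣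
        (∑ t ∈ Finset.range (m+1), (c (t+1) : ℤ) * (compoundSeq (m+1) A B (t+1) : ℤ)
         - ∑ t ∈ Finset.range (m+1), (cmax (t+1) : ℤ) * (compoundSeq (m+1) A B (t+1) : ℤ)) := by
      refine ⟨-(c 0 : ℤ) - 1, ?_⟩
      rw [Finset.sum_congr rfl hcmaxcast]
      have h2 : ∑ t ∈ Finset.range (m+1), ((A t:ℤ)-1) * (compoundSeq (m+1) A B (t+1):ℤ)
          = F + (compoundSeq (m+1) A B 0 : ℤ) := by rw [hF']; ring
      rw [h2]
      have h3 : ∑ t ∈ Finset.range (m+1), (c (t+1) : ℤ) * (compoundSeq (m+1) A B (t+1) : ℤ)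
          = F - (c 0 : ℤ) * (compoundSeq (m+1) A B 0 : ℤ) := by linarith [hcF]
      rw [h3]
      ring
    have heqall := uniq A B (m+1) hA hsuit c cmax hcbd hcmaxbd hdvd
    have hTeq : ∑ t ∈ Finset.range (m+1), (c (t+1) : ℤ) * (compoundSeq (m+1) A B (t+1) : ℤ)
        = ∑ t ∈ Finset.range (m+1), (cmax (t+1) : ℤ) * (compoundSeq (m+1) A B (t+1) : ℤ) := by
      refine Finset.sum_congr rfl ?_
      intro t ht
      simp only [Finset.mem_range] at ht
      rw [heqall t ht]
    rw [hTeq, Finset.sum_congr rfl hcmaxcast] at hcF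
    have h2 : ∑ t ∈ Finset.range (m+1), ((A t:ℤ)-1) * (compoundSeq (m+1) A B (t+1):ℤ)
        = F + (compoundSeq (m+1) A B 0 : ℤ) := by rw [hF']; ring
    rw [h2] at hcF
    have hc0 : (0:ℤ) ≤ (c 0 : ℤ) := Int.natCast_nonneg _
    nlinarith [hcF, hG0pos, hc0]
  · -- Part 3: everything above F is representable
    intro n hn
    obtain ⟨c, hcbd, hdvd⟩ := surj A B (m+1) hA hsuit n
    set T := ∑ t ∈ Finset.range (m+1), (c (t+1) : ℤ) * (compoundSeq (m+1) A B (t+1) : ℤ) with hT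
    have hTle : T ≤ ∑ t ∈ Finset.range (m+1), ((A t:ℤ)-1) * (compoundSeq (m+1) A B (t+1):ℤ) := by
      refine Finset.sum_le_sum ?_
      intro t ht
      simp only [Finset.mem_range] at ht
      have h1 : (c (t+1) : ℤ) ≤ (A t : ℤ) - 1 := by
        have := hcbd t ht
        omega
      exact mul_le_mul_of_nonneg_right h1 (le_of_lt (hGpos t ht))
    obtain ⟨q, hq⟩ := hdvd
    have hq0 : 0 ≤ q := by
      by_contra h
      push_neg at h
      have hqle : q ≤ -1 := by omega
      have : (compoundSeq (m+1) A B 0 : ℤ) * q ≤ (compoundSeq (m+1) A B 0 : ℤ) * (-1) :=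
        mul_le_mul_of_nonneg_left hqle (le_of_lt hG0pos)
      have hnT : n - T = (compoundSeq (m+1) A B 0 : ℤ) * q := hq
      have : n ≤ T - (compoundSeq (m+1) A B 0 : ℤ) := by linarith
      have hFge : F ≥ T - (compoundSeq (m+1) A B 0 : ℤ) := by rw [hF']; linarith
      linarith
    set CO : ℕ → ℕ := fun i => if i = 0 then q.toNat else c i with hCO
    refine ⟨fun i => CO (i : ℕ), ?_⟩
    rw [Fin.sum_univ_eq_sum_range (fun i => (CO i : ℤ) * (compoundSeq (m+1) A B i : ℤ)) (m+1+1)]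
    rw [Finset.sum_range_succ' (fun i => (CO i : ℤ) * (compoundSeq (m+1) A B i : ℤ)) (m+1)]
    have h1 : ∀ t ∈ Finset.range (m+1),
        (CO (t+1) : ℤ) * (compoundSeq (m+1) A B (t+1) : ℤ)
          = (c (t+1) : ℤ) * (compoundSeq (m+1) A B (t+1) : ℤ) := by
      intro t ht
      simp [hCO]
    rw [Finset.sum_congr rfl h1]
    have h2 : (CO 0 : ℤ) = q := by
      simp only [hCO, if_pos rfl]
      exact Int.toNat_of_nonneg hq0
    rw [h2, ← hT]
    linarith [hq]
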